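/- Let G and H be disjoint finite simple graphs, both 2-walk (α,β)-linear for the same α, β, with edges e = xy in G and f = uv in H such that deg_G(x) = deg_H(u) and deg_G(y) = deg_H(v). Let L be the graph on V(G) ∪ V(H) obtained from the disjoint union by deleting edges xy and uv and adding edges xv and yu. Then L is 2-walk (α,β)-linear (the degree vector d_L of L satisfies A_L d_L = α d_L + β j). -/

import Mathlib

open Matrix

/-- The graph obtained from the disjoint union of `G` and `H` by deleting the edges
`xy` and `uv` and adding the edges `xv` and `yu`. -/
def swapGraph {V W : Type*} (G : SimpleGraph V) (H : SimpleGraph W)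
    (x y : V) (u v : W) : SimpleGraph (V ⊕ W) where
  Adj a b := match a, b with
    | Sum.inl a, Sum.inl b => G.Adj a b ∧ ¬((a = x ∧ b = y) ∨ (a = y ∧ b = x))
    | Sum.inr a, Sum.inr b => H.Adj a b ∧ ¬((a = u ∧ b = v) ∨ (a = v ∧ b = u))
    | Sum.inl a, Sum.inr b => (a = x ∧ b = v) ∨ (a = y ∧ b = u)
    | Sum.inr b, Sum.inl a => (a = x ∧ b = v) ∨ (a = y ∧ b = u)
  symm := by
    constructor
    rintro (a | a) (b | b) h
    · exact ⟨G.adj_symm h.1, fun hc => h.2 (by tauto)⟩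
    · exact h
    · exact h
    · exact ⟨H.adj_symm h.1, fun hc => h.2 (by tauto)⟩
  loopless := by
    constructor
    rintro (a | a) h
    · exact G.irrefl h.1
    · exact H.irrefl h.1

lemma swap_mulVec {V W : Type*} [Fintype V] [DecidableEq V] [Fintype W] [DecidableEq W]
    (G : SimpleGraph V) (H : SimpleGraph W) [DecidableRel G.Adj] [DecidableRel H.Adj]
    (x y : V) (u v : W) (hxy : G.Adj x y) (huv : H.Adj u v)
    [DecidableRel (swapGraph G H x y u v).Adj]
    (w : V ⊕ W → ℝ) (hwu : w (Sum.inr u) = w (Sum.inl x))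
    (hwv : w (Sum.inr v) = w (Sum.inl y)) (i : V ⊕ W) :
    ((swapGraph G H x y u v).adjMatrix ℝ).mulVec w i =
      Sum.elim ((G.adjMatrix ℝ).mulVec (w ∘ Sum.inl))
        ((H.adjMatrix ℝ).mulVec (w ∘ Sum.inr)) i := by
  have hxy' : x ≠ y := hxy.ne
  have huv' : u ≠ v := huv.ne
  obtain a | a := i
  · simp only [mulVec, dotProduct, SimpleGraph.adjMatrix_apply, Sum.elim_inl,
      Function.comp, Fintype.sum_sum_type, ite_mul, one_mul, zero_mul]
    by_cases hax : a = x
    · subst hax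
      have h1 : ∀ b : V, (if (swapGraph G H a y u v).Adj (Sum.inl a) (Sum.inl b)
            then w (Sum.inl b) else 0)
          = (if G.Adj a b then w (Sum.inl b) else 0)
            - (if b = y then (if G.Adj a b then w (Sum.inl b) else 0) else 0) := by
        intro b
        by_cases hb : b = y <;> by_cases h : G.Adj a b <;>
          simp [swapGraph, hb, h, hxy'.symm, hxy']
      have h2 : ∀ b : W, (if (swapGraph G H a y u v).Adj (Sum.inl a) (Sum.inr b)
            then w (Sum.inr b) else 0)
          = (if b = v then w (Sum.inr b) else 0) := by
        intro b
        by_cases hb : b = v <;> simp [swapGraph, hb, hxy']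
      simp only [h1, h2, Finset.sum_sub_distrib, Finset.sum_ite_eq' Finset.univ]
      simp [hxy, hwv]
    · by_cases hay : a = y
      · subst hay
        have h1 : ∀ b : V, (if (swapGraph G H x a u v).Adj (Sum.inl a) (Sum.inl b)
              then w (Sum.inl b) else 0)
            = (if G.Adj a b then w (Sum.inl b) else 0)
              - (if b = x then (if G.Adj a b then w (Sum.inl b) else 0) else 0) := by
          intro b
          by_cases hb : b = x <;> by_cases h : G.Adj a b <;>
            simp [swapGraph, hb, h, hxy'.symm, hxy']
        have h2 : ∀ b : W, (if (swapGraph G H x a u v).Adj (Sum.inl a) (Sum.inr b)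
              then w (Sum.inr b) else 0)
            = (if b = u then w (Sum.inr b) else 0) := by
          intro b
          by_cases hb : b = u <;> simp [swapGraph, hb, hxy', hxy'.symm]
        simp only [h1, h2, Finset.sum_sub_distrib, Finset.sum_ite_eq' Finset.univ]
        simp [hxy.symm, hwu]
      · have h1 : ∀ b : V, (if (swapGraph G H x y u v).Adj (Sum.inl a) (Sum.inl b)
              then w (Sum.inl b) else 0)
            = (if G.Adj a b then w (Sum.inl b) else 0) := by
          intro b
          simp [swapGraph, hax, hay]
        have h2 : ∀ b : W, (if (swapGraph G H x y u v).Adj (Sum.inl a) (Sum.inr b)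
              then w (Sum.inr b) else 0) = 0 := by
          intro b
          simp [swapGraph, hax, hay]
        simp [h1, h2]
  · simp only [mulVec, dotProduct, SimpleGraph.adjMatrix_apply, Sum.elim_inr,
      Function.comp, Fintype.sum_sum_type, ite_mul, one_mul, zero_mul]
    by_cases hau : a = u
    · subst hau
      have h1 : ∀ b : W, (if (swapGraph G H x y a v).Adj (Sum.inr a) (Sum.inr b)
            then w (Sum.inr b) else 0)
          = (if H.Adj a b then w (Sum.inr b) else 0)
            - (if b = v then (if H.Adj a b then w (Sum.inr b) else 0) else 0) := by
        intro b
        by_cases hb : b = v <;> by_cases h : H.Adj a b <;>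
          simp [swapGraph, hb, h, huv'.symm, huv']
      have h2 : ∀ b : V, (if (swapGraph G H x y a v).Adj (Sum.inr a) (Sum.inl b)
            then w (Sum.inl b) else 0)
          = (if b = y then w (Sum.inl b) else 0) := by
        intro b
        by_cases hb : b = y <;> simp [swapGraph, hb, huv', huv'.symm]
      simp only [h1, h2, Finset.sum_sub_distrib, Finset.sum_ite_eq' Finset.univ]
      simp [huv]
      linarith
    · by_cases hav : a = v
      · subst hav
        have h1 : ∀ b : W, (if (swapGraph G H x y u a).Adj (Sum.inr a) (Sum.inr b)
              then w (Sum.inr b) else 0)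
            = (if H.Adj a b then w (Sum.inr b) else 0)
              - (if b = u then (if H.Adj a b then w (Sum.inr b) else 0) else 0) := by
          intro b
          by_cases hb : b = u <;> by_cases h : H.Adj a b <;>
            simp [swapGraph, hb, h, huv'.symm, huv']
        have h2 : ∀ b : V, (if (swapGraph G H x y u a).Adj (Sum.inr a) (Sum.inl b)
              then w (Sum.inl b) else 0)
            = (if b = x then w (Sum.inl b) else 0) := by
          intro b
          by_cases hb : b = x <;> simp [swapGraph, hb, huv', huv'.symm]
        simp only [h1, h2, Finset.sum_sub_distrib, Finset.sum_ite_eq' Finset.univ]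
        simp [huv.symm]
        linarith
      · have h1 : ∀ b : W, (if (swapGraph G H x y u v).Adj (Sum.inr a) (Sum.inr b)
              then w (Sum.inr b) else 0)
            = (if H.Adj a b then w (Sum.inr b) else 0) := by
          intro b
          simp [swapGraph, hau, hav]
        have h2 : ∀ b : V, (if (swapGraph G H x y u v).Adj (Sum.inr a) (Sum.inl b)
              then w (Sum.inl b) else 0) = 0 := by
          intro b
          simp [swapGraph, hau, hav]
        simp [h1, h2]

theorem stmt_13 {V W : Type*} [Fintype V] [DecidableEq V] [Fintype W] [DecidableEq W]
    (G : SimpleGraph V) (H : SimpleGraph W) [DecidableRel G.Adj] [DecidableRel H.Adj]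
    (α β : ℝ)
    (hGnonreg : ¬ ∃ k : ℕ, G.IsRegularOfDegree k)
    (hHnonreg : ¬ ∃ k : ℕ, H.IsRegularOfDegree k)
    (hGlin : (G.adjMatrix ℝ).mulVec ((G.adjMatrix ℝ).mulVec (fun _ => (1 : ℝ))) =
      α • (G.adjMatrix ℝ).mulVec (fun _ => (1 : ℝ)) + β • (fun _ => (1 : ℝ)))
    (hHlin : (H.adjMatrix ℝ).mulVec ((H.adjMatrix ℝ).mulVec (fun _ => (1 : ℝ))) =
      α • (H.adjMatrix ℝ).mulVec (fun _ => (1 : ℝ)) + β • (fun _ => (1 : ℝ)))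
    (x y : V) (u v : W) (hxy : G.Adj x y) (huv : H.Adj u v)
    (hdx : G.degree x = H.degree u) (hdy : G.degree y = H.degree v)
    [DecidableRel (swapGraph G H x y u v).Adj] :
    ((swapGraph G H x y u v).adjMatrix ℝ).mulVec
        (((swapGraph G H x y u v).adjMatrix ℝ).mulVec (fun _ => (1 : ℝ))) =
      α • ((swapGraph G H x y u v).adjMatrix ℝ).mulVec (fun _ => (1 : ℝ)) +
        β • (fun _ => (1 : ℝ)) := by
  set dL := ((swapGraph G H x y u v).adjMatrix ℝ).mulVec (fun _ => (1 : ℝ)) with hdL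
  have hdeg : ∀ i : V ⊕ W, dL i = Sum.elim ((G.adjMatrix ℝ).mulVec (fun _ => (1:ℝ)))
      ((H.adjMatrix ℝ).mulVec (fun _ => (1:ℝ))) i := by
    intro i
    have := swap_mulVec G H x y u v hxy huv (fun _ => (1:ℝ)) rfl rfl i
    exact this
  have hdegG : ∀ a : V, (G.adjMatrix ℝ).mulVec (fun _ => (1:ℝ)) a = (G.degree a : ℝ) := by
    intro a; simp [SimpleGraph.adjMatrix_mulVec_apply]
  have hdegH : ∀ b : W, (H.adjMatrix ℝ).mulVec (fun _ => (1:ℝ)) b = (H.degree b : ℝ) := by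
    intro b; simp [SimpleGraph.adjMatrix_mulVec_apply]
  have hwu : dL (Sum.inr u) = dL (Sum.inl x) := by
    rw [hdeg, hdeg]; simp [hdegG, hdegH, hdx]
  have hwv : dL (Sum.inr v) = dL (Sum.inl y) := by
    rw [hdeg, hdeg]; simp [hdegG, hdegH, hdy]
  funext i
  have key := swap_mulVec G H x y u v hxy huv dL hwu hwv i
  rw [key]
  obtain a | a := i
  · have h1 : dL ∘ Sum.inl = (G.adjMatrix ℝ).mulVec (fun _ => (1:ℝ)) := by
      funext b; simpa using hdeg (Sum.inl b)
    simp only [Sum.elim_inl, h1]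
    rw [congrFun hGlin a]
    simp [hdeg (Sum.inl a)]
  · have h1 : dL ∘ Sum.inr = (H.adjMatrix ℝ).mulVec (fun _ => (1:ℝ)) := by
      funext b; simpa using hdeg (Sum.inr b)
    simp only [Sum.elim_inr, h1]
    rw [congrFun hHlin a]
    simp [hdeg (Sum.inr a)]
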